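/- Let T ≥ 1, X = {0,1,…,T}, and S := X × {0,1}. Consider the deterministic right-shift transition q_{z,x} = 1 if x = min(z+1, T) and q_{z,x} = 0 otherwise, the cost Φ(x, μ) = μ(x), and the initial distribution ν_0 with ν_0(0,1) = 1 and ν_0(x,a) = 0 otherwise. For a policy p = (p_n)_{n=0,…,T} with p_n : X → [0,1] and p_T ≡ 1, define the trajectory ν_{n+1} = F̄(ν_n, p_n) and the cost J(p) := Σ_{n=0}^{T} Σ_{x∈X} ν_n(x,1) (ν_n)_X(x) p_n(x). Then the optimal value is inf_p J(p) = (T+2)/(2(T+1)), and it is attained by the policy p_n(x) = 1/(T+1−n) for n < T. -/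

import Mathlib

/-!
The "towards the uniform" example: states `X = {0,…,T}`, deterministic right shift
with absorbing boundary at `T`, cost `Φ(x,μ) = μ(x)`, all mass initially at state
`0` (alive). The optimal value is `(T+2)/(2(T+1))`, attained by the policy
`p_n(x) = 1/(T+1−n)`.
-/

namespace TowardsUniform

/-- Deterministic right-shift transition on `{0,…,T}` with absorbing boundary:
`q_{z,x} = 1` if `x = min(z+1, T)`, else `0`. -/
def q (T : ℕ) (z x : Fin (T + 1)) : ℝ := if x.val = min (z.val + 1) T then 1 else 0

/-- First marginal `ν_X(x) = ν(x,0) + ν(x,1)` (`false` = stopped, `true` = alive). -/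
def margX {T : ℕ} (ν : Fin (T + 1) × Bool → ℝ) (x : Fin (T + 1)) : ℝ :=
  ν (x, false) + ν (x, true)

/-- The mean-field transition `F̄(ν,h)`. -/
def Fbar {T : ℕ} (ν : Fin (T + 1) × Bool → ℝ) (h : Fin (T + 1) → ℝ) :
    Fin (T + 1) × Bool → ℝ
  | (x, false) => ν (x, false) + ν (x, true) * h x
  | (x, true) => ∑ z, ν (z, true) * q T z x * (1 - h z)

/-- Trajectory under the policy `p`, started from the initial distribution `ν_0`
with `ν_0(0,1) = 1` and `ν_0(x,a) = 0` otherwise. -/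
def traj {T : ℕ} (p : ℕ → Fin (T + 1) → ℝ) : ℕ → Fin (T + 1) × Bool → ℝ
  | 0 => fun s => if s = ((0 : Fin (T + 1)), true) then 1 else 0
  | n + 1 => Fbar (traj p n) (p n)

/-- The total cost `J(p) = Σ_{n=0}^{T} Σ_x ν_n(x,1) (ν_n)_X(x) p_n(x)`
(the cost function is `Φ(x,μ) = μ(x)`). -/
def J {T : ℕ} (p : ℕ → Fin (T + 1) → ℝ) : ℝ :=
  ∑ n ∈ Finset.range (T + 1),
    ∑ x, (traj p n) (x, true) * margX (traj p n) x * p n x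

/-- A policy: stopping probabilities in `[0,1]` on `{0,…,T}` with `p_T ≡ 1`. -/
def IsPolicy (T : ℕ) (p : ℕ → Fin (T + 1) → ℝ) : Prop :=
  (∀ n ≤ T, ∀ x, p n x ∈ Set.Icc (0 : ℝ) 1) ∧ ∀ x, p T x = 1

/-- The (state-independent) policy `p_n(x) = 1/(T+1−n)`. -/
noncomputable def pstar (T : ℕ) : ℕ → Fin (T + 1) → ℝ :=
  fun n _ => 1 / ((T : ℝ) + 1 - (n : ℝ))

/-! ### Auxiliary development -/

/-- The state `min n T` as an element of `Fin (T+1)`. -/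
def sn (T n : ℕ) : Fin (T + 1) := ⟨min n T, by omega⟩

/-- The alive mass at time `n` under policy `p`. -/
def mfun (T : ℕ) (p : ℕ → Fin (T + 1) → ℝ) : ℕ → ℝ
  | 0 => 1
  | n + 1 => mfun T p n * (1 - p n (sn T n))

lemma traj_char {T : ℕ} (p : ℕ → Fin (T + 1) → ℝ) :
    ∀ n, n ≤ T →
    (∀ x : Fin (T + 1), n ≤ x.val → traj p n (x, false) = 0) ∧
    (∀ x : Fin (T + 1), traj p n (x, true) =
        if x.val = n then mfun T p n else 0) := by
  intro n
  induction n with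
  | zero =>
    intro _
    constructor
    · intro x hx
      simp [traj]
    · intro x
      have : ((x, true) = ((0 : Fin (T + 1)), true)) ↔ (x.val = 0) := by
        simp only [Prod.mk.injEq, and_true, Fin.ext_iff, Fin.val_zero]
      simp only [traj, mfun, this]
  | succ n ih =>
    intro hn
    obtain ⟨h0, h1⟩ := ih (by omega)
    have hsn : sn T n = ⟨n, by omega⟩ := by
      simp [sn, Fin.ext_iff]; omega
    constructor
    · intro x hx
      show Fbar (traj p n) (p n) (x, false) = 0
      have hx1 : traj p n (x, false) = 0 := h0 x (by omega)
      have hx2 : traj p n (x, true) = 0 := by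
        rw [h1 x, if_neg (by omega)]
      simp [Fbar, hx1, hx2]
    · intro x
      show Fbar (traj p n) (p n) (x, true) = _
      simp only [Fbar]
      rw [Finset.sum_eq_single (⟨n, by omega⟩ : Fin (T + 1))]
      · rw [h1, if_pos rfl]
        have hq : q T ⟨n, by omega⟩ x = if x.val = n + 1 then 1 else 0 := by
          simp only [q]
          congr 1
          simp only [eq_iff_iff]
          omega
        rw [hq, hsn.symm]
        by_cases hxe : x.val = n + 1 <;>
          simp [hxe, mfun, mul_comm]
      · intro b _ hb
        rw [h1 b, if_neg (by simpa [Fin.ext_iff] using hb)]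
        ring
      · intro h
        exact absurd (Finset.mem_univ _) h

lemma J_eq {T : ℕ} (p : ℕ → Fin (T + 1) → ℝ) :
    J p = ∑ n ∈ Finset.range (T + 1),
      (mfun T p n) ^ 2 * p n (sn T n) := by
  unfold J
  refine Finset.sum_congr rfl fun n hn => ?_
  have hn' : n ≤ T := by
    have := Finset.mem_range.mp hn; omega
  obtain ⟨h0, h1⟩ := traj_char p n hn'
  have hsn : sn T n = ⟨n, by omega⟩ := by
    simp [sn, Fin.ext_iff]; omega
  rw [Finset.sum_eq_single (⟨n, by omega⟩ : Fin (T + 1))]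
  · rw [h1, if_pos rfl]
    have hst : traj p n ((⟨n, by omega⟩ : Fin (T + 1)), false) = 0 :=
      h0 _ (le_refl n)
    rw [margX, hst, h1, if_pos rfl, hsn]
    ring
  · intro b _ hb
    rw [h1 b, if_neg (by simpa [Fin.ext_iff] using hb)]
    ring
  · intro h
    exact absurd (Finset.mem_univ _) h

lemma mfun_succ_eq {T : ℕ} (p : ℕ → Fin (T + 1) → ℝ) (n : ℕ) :
    mfun T p (n + 1) = mfun T p n - mfun T p n * p n (sn T n) := by
  simp only [mfun]; ring

/-- The key algebraic identity: `2 Σ mₙ² cₙ = m₀² - m_N² + Σ (mₙ cₙ)²`. -/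
lemma sum_identity {T : ℕ} (p : ℕ → Fin (T + 1) → ℝ) (N : ℕ) :
    2 * ∑ n ∈ Finset.range N, (mfun T p n) ^ 2 * p n (sn T n) =
      (mfun T p 0) ^ 2 - (mfun T p N) ^ 2 +
        ∑ n ∈ Finset.range N, (mfun T p n * p n (sn T n)) ^ 2 := by
  induction N with
  | zero => simp
  | succ N ih =>
    rw [Finset.sum_range_succ, Finset.sum_range_succ, mul_add, ih,
      mfun_succ_eq]
    ring

lemma mfun_final {T : ℕ} (p : ℕ → Fin (T + 1) → ℝ) (hp : ∀ x, p T x = 1) :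
    mfun T p (T + 1) = 0 := by
  simp [mfun, hp]

lemma sum_u {T : ℕ} (p : ℕ → Fin (T + 1) → ℝ) (hp : ∀ x, p T x = 1) :
    ∑ n ∈ Finset.range (T + 1), mfun T p n * p n (sn T n) = 1 := by
  have := Finset.sum_range_sub' (fun n => mfun T p n) (T + 1)
  simp only [mfun_succ_eq] at this
  have h2 : ∑ n ∈ Finset.range (T + 1),
      (mfun T p n - (mfun T p n - mfun T p n * p n (sn T n))) =
      ∑ n ∈ Finset.range (T + 1), mfun T p n * p n (sn T n) := by
    refine Finset.sum_congr rfl fun n _ => by ring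
  rw [h2] at this
  rw [this, hp (sn T T)]
  simp only [mfun]
  ring

lemma J_formula {T : ℕ} (p : ℕ → Fin (T + 1) → ℝ) (hp : ∀ x, p T x = 1) :
    J p = (1 + ∑ n ∈ Finset.range (T + 1),
      (mfun T p n * p n (sn T n)) ^ 2) / 2 := by
  have h := sum_identity p (T + 1)
  rw [mfun_final p hp] at h
  simp only [mfun] at h
  rw [J_eq]
  linarith

lemma J_lower {T : ℕ} (p : ℕ → Fin (T + 1) → ℝ) (hp : ∀ x, p T x = 1) :
    ((T : ℝ) + 2) / (2 * ((T : ℝ) + 1)) ≤ J p := by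
  have hcs := sq_sum_le_card_mul_sum_sq
    (s := Finset.range (T + 1)) (f := fun n => mfun T p n * p n (sn T n))
  rw [sum_u p hp] at hcs
  simp only [Finset.card_range] at hcs
  have hT1 : (0 : ℝ) < (T : ℝ) + 1 := by positivity
  have hcast : ((T + 1 : ℕ) : ℝ) = (T : ℝ) + 1 := by push_cast; ring
  rw [hcast] at hcs
  have hsum : (1 : ℝ) / ((T : ℝ) + 1) ≤
      ∑ n ∈ Finset.range (T + 1), (mfun T p n * p n (sn T n)) ^ 2 := by
    rw [div_le_iff₀ hT1]
    calc (1 : ℝ) = 1 ^ 2 := by ring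
    _ ≤ ((T : ℝ) + 1) * ∑ n ∈ Finset.range (T + 1),
        (mfun T p n * p n (sn T n)) ^ 2 := hcs
    _ = _ := by ring
  rw [J_formula p hp]
  rw [div_le_div_iff₀ (by positivity) (by norm_num)]
  have := mul_le_mul_of_nonneg_left hsum (le_of_lt hT1)
  rw [mul_one_div, div_self (ne_of_gt hT1)] at this
  nlinarith [hsum]

lemma pstar_mfun (T : ℕ) :
    ∀ n, n ≤ T + 1 → mfun T (pstar T) n = ((T : ℝ) + 1 - n) / ((T : ℝ) + 1) := by
  intro n
  induction n with
  | zero =>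
    intro _
    simp only [mfun, Nat.cast_zero, sub_zero]
    rw [div_self (by positivity)]
  | succ n ih =>
    intro hn
    have hden : (T : ℝ) + 1 - n ≠ 0 := by
      have : (n : ℝ) < (T : ℝ) + 1 := by
        exact_mod_cast Nat.lt_succ_of_le (by omega)
      linarith
    rw [mfun, ih (by omega), pstar]
    push_cast
    field_simp
    ring

lemma pstar_u (T : ℕ) : ∀ n, n ≤ T →
    mfun T (pstar T) n * pstar T n (sn T n) = 1 / ((T : ℝ) + 1) := by
  intro n hn
  have hden : (T : ℝ) + 1 - n ≠ 0 := by
    have : (n : ℝ) < (T : ℝ) + 1 := by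
      exact_mod_cast Nat.lt_succ_of_le (by omega)
    linarith
  rw [pstar_mfun T n (by omega), pstar]
  field_simp

lemma pstar_last (T : ℕ) : ∀ x, pstar T T x = 1 := by
  intro x
  simp [pstar]

lemma pstar_J (T : ℕ) :
    J (pstar T) = ((T : ℝ) + 2) / (2 * ((T : ℝ) + 1)) := by
  rw [J_formula (pstar T) (pstar_last T)]
  have h : ∑ n ∈ Finset.range (T + 1),
      (mfun T (pstar T) n * pstar T n (sn T n)) ^ 2 =
      ∑ n ∈ Finset.range (T + 1), (1 / ((T : ℝ) + 1)) ^ 2 := by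
    refine Finset.sum_congr rfl fun n hn => ?_
    rw [pstar_u T n (by have := Finset.mem_range.mp hn; omega)]
  rw [h, Finset.sum_const, Finset.card_range]
  have hT1 : ((T : ℝ) + 1) ≠ 0 := by positivity
  have hcast : ((T + 1 : ℕ) : ℝ) = (T : ℝ) + 1 := by push_cast; ring
  rw [nsmul_eq_mul, hcast]
  field_simp
  ring

lemma pstar_isPolicy (T : ℕ) : IsPolicy T (pstar T) := by
  constructor
  · intro n hn x
    have h1 : (1 : ℝ) ≤ (T : ℝ) + 1 - n := by
      have : (n : ℝ) ≤ (T : ℝ) := by exact_mod_cast hn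
      linarith
    have h0 : (0 : ℝ) < (T : ℝ) + 1 - n := by linarith
    constructor
    · rw [pstar]; positivity
    · rw [pstar, div_le_one h0]; linarith
  · exact pstar_last T

/-- **Towards the uniform**: the optimal value equals `(T+2)/(2(T+1))` and is
attained by the policy `p_n(x) = 1/(T+1−n)`. -/
theorem optimal_value (T : ℕ) (hT : 1 ≤ T) :
    sInf {r | ∃ p : ℕ → Fin (T + 1) → ℝ, IsPolicy T p ∧ J p = r} =
        ((T : ℝ) + 2) / (2 * ((T : ℝ) + 1)) ∧
      IsPolicy T (pstar T) ∧
      J (pstar T) = ((T : ℝ) + 2) / (2 * ((T : ℝ) + 1)) := by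
  refine ⟨?_, pstar_isPolicy T, pstar_J T⟩
  apply IsLeast.csInf_eq
  constructor
  · exact ⟨pstar T, pstar_isPolicy T, pstar_J T⟩
  · rintro r ⟨p, hp, rfl⟩
    exact J_lower p hp.2

end TowardsUniform
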